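/- Let c ∈ R, c ≠ 0, d ≥ 1, f(x) = e^{πi c|x|^2}, and g(x) = e^{-π|x|^2}. Then |V_g f(x,ξ)| = (1+c^2)^{-d/4} e^{-π|ξ - cx|^2/(1+c^2)} for all (x,ξ) ∈ R^{2d}, and consequently WF_G(f) = {(x,ξ) : x ≠ 0, ξ = cx}. -/

import Mathlib

open MeasureTheory Real Complex RealInnerProductSpace

/-- The short-time Fourier transform. -/
noncomputable def STFT (d : ℕ) (g f : EuclideanSpace ℝ (Fin d) → ℂ)
    (x ξ : EuclideanSpace ℝ (Fin d)) : ℂ :=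
  ∫ t : EuclideanSpace ℝ (Fin d), f t * (starRingEnd ℂ) (g (t - x)) *
    Complex.exp (-2 * π * Complex.I * (⟪ξ, t⟫ : ℝ))

/-- The Gabor wave front set of `f` with respect to the window `g`. -/
def GaborWF (d : ℕ) (g f : EuclideanSpace ℝ (Fin d) → ℂ) :
    Set (EuclideanSpace ℝ (Fin d) × EuclideanSpace ℝ (Fin d)) :=
  {z₁ | z₁ ≠ 0 ∧ ¬ ∃ Γ : Set (EuclideanSpace ℝ (Fin d) × EuclideanSpace ℝ (Fin d)),
    IsOpen Γ ∧ (∀ z ∈ Γ, ∀ l : ℝ, 0 < l → l • z ∈ Γ) ∧ z₁ ∈ Γ ∧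
    ∀ r : ℝ, 0 < r → ∃ C : ℝ, ∀ z ∈ Γ,
      ‖STFT d g f z.1 z.2‖ ≤ C * (1 + ‖z‖ ^ 2) ^ (-r / 2)}


lemma norm_sq_sum {d : ℕ} (w : EuclideanSpace ℝ (Fin d)) : ‖w‖ ^ 2 = ∑ i, w i ^ 2 := by
  rw [← real_inner_self_eq_norm_sq]
  simp only [PiLp.inner_apply, RCLike.inner_apply, conj_trivial, sq]

lemma inner_sum' {d : ℕ} (w v : EuclideanSpace ℝ (Fin d)) : (⟪w, v⟫ : ℝ) = ∑ i, w i * v i := by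
  simp [PiLp.inner_apply, mul_comm]

lemma gauss2 {d : ℕ} {b : ℂ} (hb : 0 < b.re) (c₁ c₂ : ℂ) (w₁ w₂ : EuclideanSpace ℝ (Fin d)) :
    ∫ v : EuclideanSpace ℝ (Fin d),
        Complex.exp (-b * (‖v‖ : ℂ) ^ 2 + (c₁ * (⟪w₁, v⟫ : ℝ) + c₂ * (⟪w₂, v⟫ : ℝ))) =
      (π / b) ^ ((d : ℂ) / 2) *
        Complex.exp ((c₁ ^ 2 * (‖w₁‖ : ℂ) ^ 2 + 2 * c₁ * c₂ * (⟪w₁, w₂⟫ : ℝ)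
          + c₂ ^ 2 * (‖w₂‖ : ℂ) ^ 2) / (4 * b)) := by
  have h := (EuclideanSpace.volume_preserving_symm_measurableEquiv_toLp (Fin d)).symm
  rw [← h.integral_comp (MeasurableEquiv.measurableEmbedding _)]
  have key := GaussianFourier.integral_cexp_neg_mul_sum_add hb
    (fun i ↦ c₁ * (w₁ i : ℂ) + c₂ * (w₂ i : ℂ))
  have hcoord : ∀ (y : Fin d → ℝ) (i : Fin d),
      ((MeasurableEquiv.toLp 2 (Fin d → ℝ)) y) i = y i := fun y i => rfl
  have h1 : ∀ y : Fin d → ℝ,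
      ((fun v : EuclideanSpace ℝ (Fin d) =>
        Complex.exp (-b * (‖v‖ : ℂ) ^ 2 + (c₁ * (⟪w₁, v⟫ : ℝ) + c₂ * (⟪w₂, v⟫ : ℝ)))) ∘
        ⇑(MeasurableEquiv.toLp 2 (Fin d → ℝ))) y =
      Complex.exp (-b * ∑ i, (y i : ℂ) ^ 2 + ∑ i, (c₁ * (w₁ i : ℂ) + c₂ * (w₂ i : ℂ)) * (y i : ℂ)) := by
    intro y
    simp only [Function.comp_apply]
    congr 1
    have hnorm : (‖(MeasurableEquiv.toLp 2 (Fin d → ℝ)) y‖ : ℝ) ^ 2 = ∑ i, (y i) ^ 2 := by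
      rw [norm_sq_sum]
      exact Finset.sum_congr rfl fun i _ => by rw [hcoord]
    have hin : ∀ w : EuclideanSpace ℝ (Fin d),
        (⟪w, (MeasurableEquiv.toLp 2 (Fin d → ℝ)) y⟫ : ℝ) = ∑ i, w i * y i := by
      intro w
      rw [inner_sum']
      exact Finset.sum_congr rfl fun i _ => by rw [hcoord]
    have hsplit : ∑ i, (c₁ * (w₁ i : ℂ) + c₂ * (w₂ i : ℂ)) * (y i : ℂ)
        = c₁ * (∑ i, (w₁ i : ℂ) * (y i : ℂ)) + c₂ * (∑ i, (w₂ i : ℂ) * (y i : ℂ)) := by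
      rw [Finset.mul_sum, Finset.mul_sum, ← Finset.sum_add_distrib]
      exact Finset.sum_congr rfl fun i _ => by ring
    rw [hin, hin, hsplit]
    have hnc : ((‖(MeasurableEquiv.toLp 2 (Fin d → ℝ)) y‖ : ℝ) : ℂ) ^ 2
        = ∑ i, ((y i : ℝ) : ℂ) ^ 2 := by exact_mod_cast congrArg (fun r : ℝ => (r : ℂ)) hnorm
    rw [hnc]
    push_cast
    ring
  refine (MeasureTheory.integral_congr_ae (Filter.Eventually.of_forall h1)).trans ?_
  rw [key]
  have hsum : ∑ i, (c₁ * (w₁ i : ℂ) + c₂ * (w₂ i : ℂ)) ^ 2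
      = c₁ ^ 2 * (‖w₁‖ : ℂ) ^ 2 + 2 * c₁ * c₂ * ((⟪w₁, w₂⟫ : ℝ) : ℂ) + c₂ ^ 2 * (‖w₂‖ : ℂ) ^ 2 := by
    have e₁ : ((‖w₁‖ : ℝ) : ℂ) ^ 2 = ∑ i, ((w₁ i : ℂ)) ^ 2 := by
      push_cast [← norm_sq_sum w₁]; norm_cast; exact (norm_sq_sum w₁)
    have e₂ : ((‖w₂‖ : ℝ) : ℂ) ^ 2 = ∑ i, ((w₂ i : ℂ)) ^ 2 := by
      push_cast [← norm_sq_sum w₂]; norm_cast; exact (norm_sq_sum w₂)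
    have e₃ : ((⟪w₁, w₂⟫ : ℝ) : ℂ) = ∑ i, (w₁ i : ℂ) * (w₂ i : ℂ) := by
      rw [inner_sum']; push_cast; rfl
    rw [e₁, e₂, e₃, Finset.mul_sum, Finset.mul_sum, Finset.mul_sum,
      ← Finset.sum_add_distrib, ← Finset.sum_add_distrib]
    exact Finset.sum_congr rfl fun i _ => by ring
  rw [hsum, Fintype.card_fin]



lemma decay_bound {a A r : ℝ} (ha : 0 < a) (hA : 0 < A) (hr : 0 < r) :
    ∃ C : ℝ, ∀ s : ℝ, 0 ≤ s → A * Real.exp (-(a * s)) ≤ C * (1 + s) ^ (-r / 2) := by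
  set n := ⌈r⌉₊ with hn
  refine ⟨A * Real.exp a * (n.factorial : ℝ) / a ^ n, fun s hs => ?_⟩
  have h1s : (0:ℝ) < 1 + s := by linarith
  have hrn : r / 2 ≤ (n : ℝ) := le_trans (by linarith) (Nat.le_ceil r)
  have e1 : (a * (1 + s)) ^ n / (n.factorial : ℝ) ≤ Real.exp (a * (1 + s)) :=
    Real.pow_div_factorial_le_exp (a * (1 + s)) (by positivity) n
  have hpow : (0:ℝ) < (a * (1 + s)) ^ n / (n.factorial : ℝ) := by positivity
  have e2 : Real.exp (-(a * (1 + s))) ≤ (n.factorial : ℝ) / (a * (1 + s)) ^ n := by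
    rw [Real.exp_neg]
    calc (Real.exp (a * (1 + s)))⁻¹ ≤ ((a * (1 + s)) ^ n / (n.factorial : ℝ))⁻¹ := by
          exact inv_anti₀ hpow e1
      _ = (n.factorial : ℝ) / (a * (1 + s)) ^ n := by rw [inv_div]
  have e3 : Real.exp (-(a * s)) = Real.exp a * Real.exp (-(a * (1 + s))) := by
    rw [← Real.exp_add]; ring_nf
  have e4 : ((1 + s) ^ n : ℝ)⁻¹ ≤ (1 + s) ^ (-r / 2) := by
    have : ((1 + s) ^ n : ℝ)⁻¹ = (1 + s) ^ (-(n : ℝ)) := by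
      rw [Real.rpow_neg h1s.le, Real.rpow_natCast]
    rw [this]
    exact Real.rpow_le_rpow_of_exponent_le (by linarith) (by linarith)
  calc A * Real.exp (-(a * s)) = A * Real.exp a * Real.exp (-(a * (1 + s))) := by
        rw [e3]; ring
    _ ≤ A * Real.exp a * ((n.factorial : ℝ) / (a * (1 + s)) ^ n) := by
        exact mul_le_mul_of_nonneg_left e2 (by positivity)
    _ = (A * Real.exp a * (n.factorial : ℝ) / a ^ n) * ((1 + s) ^ n : ℝ)⁻¹ := by
        rw [mul_pow]
        field_simp
    _ ≤ (A * Real.exp a * (n.factorial : ℝ) / a ^ n) * (1 + s) ^ (-r / 2) := by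
        exact mul_le_mul_of_nonneg_left e4 (by positivity)


lemma stft_norm (d : ℕ) (c : ℝ) (x ξ : EuclideanSpace ℝ (Fin d)) :
    ‖STFT d (fun v => Complex.exp (-(π : ℂ) * (‖v‖ : ℂ) ^ 2))
        (fun v => Complex.exp ((π : ℂ) * Complex.I * (c : ℂ) * (‖v‖ : ℂ) ^ 2)) x ξ‖
      = (1 + c ^ 2) ^ (-(d : ℝ) / 4) *
          Real.exp (-π * ‖ξ - c • x‖ ^ 2 / (1 + c ^ 2)) := by
  set b : ℂ := (π : ℂ) * (1 - Complex.I * c) with hbdef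
  have hbre : 0 < b.re := by
    simp [hbdef, Complex.mul_re, Complex.sub_re, Complex.mul_im, pi_pos]
  have hbne : b ≠ 0 := fun h => by simp [h] at hbre
  have h1c : (1 : ℝ) + c ^ 2 > 0 := by positivity
  have h1cC : ((1 : ℂ) + c ^ 2) ≠ 0 := by
    exact_mod_cast h1c.ne'
  -- step 1: rewrite the integrand
  have hint : STFT d (fun v => Complex.exp (-(π : ℂ) * (‖v‖ : ℂ) ^ 2))
      (fun v => Complex.exp ((π : ℂ) * Complex.I * (c : ℂ) * (‖v‖ : ℂ) ^ 2)) x ξ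
      = (∫ t : EuclideanSpace ℝ (Fin d), Complex.exp (-b * (‖t‖ : ℂ) ^ 2 +
          ((2 * π : ℂ) * (⟪x, t⟫ : ℝ) + (-2 * π * Complex.I) * (⟪ξ, t⟫ : ℝ))))
        * Complex.exp (-(π : ℂ) * (‖x‖ : ℂ) ^ 2) := by
    rw [STFT, ← integral_mul_const]
    congr 1 with t
    have hconj : (starRingEnd ℂ) (Complex.exp (-(π : ℂ) * (‖t - x‖ : ℂ) ^ 2))
        = Complex.exp (-(π : ℂ) * (‖t - x‖ : ℂ) ^ 2) := by
      rw [← Complex.exp_conj]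
      congr 1
      simp [map_mul, Complex.conj_ofReal]
    rw [hconj, ← Complex.exp_add, ← Complex.exp_add, ← Complex.exp_add]
    congr 1
    have hns : (‖t - x‖ : ℝ) ^ 2 = ‖t‖ ^ 2 - 2 * (⟪x, t⟫ : ℝ) + ‖x‖ ^ 2 := by
      rw [norm_sub_sq_real, real_inner_comm]
    have hnsC : ((‖t - x‖ : ℝ) : ℂ) ^ 2
        = ((‖t‖ : ℝ) : ℂ) ^ 2 - 2 * ((⟪x, t⟫ : ℝ) : ℂ) + ((‖x‖ : ℝ) : ℂ) ^ 2 := by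
      exact_mod_cast congrArg (fun r : ℝ => (r : ℂ)) hns
    rw [hnsC, hbdef]
    push_cast
    ring
  rw [hint, gauss2 hbre, norm_mul, norm_mul, Complex.norm_exp, Complex.norm_exp]
  have hB : (⟪x, ξ⟫ : ℝ) = ⟪x, ξ⟫ := rfl
  set B : ℝ := (⟪x, ξ⟫ : ℝ) with hBdef
  have hsub : ‖ξ - c • x‖ ^ 2 = ‖ξ‖ ^ 2 - 2 * c * B + c ^ 2 * ‖x‖ ^ 2 := by
    rw [norm_sub_sq_real, real_inner_smul_right, norm_smul, real_inner_comm]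
    simp [mul_pow, abs_mul_abs_self, hBdef]
    ring
  have habs : ‖((↑π / b) ^ ((d : ℂ) / 2))‖ = (1 + c ^ 2) ^ (-(d : ℝ) / 4) := by
    have hcast : ((d : ℂ) / 2) = (((d : ℝ) / 2 : ℝ) : ℂ) := by push_cast; ring
    rw [hcast, norm_cpow_real]
    have habsb : ‖b‖ = π * Real.sqrt (1 + c ^ 2) := by
      rw [hbdef, norm_mul, Complex.norm_def, Complex.norm_def]
      have : Complex.normSq (1 - Complex.I * c) = 1 + c ^ 2 := by
        simp [Complex.normSq_apply, sq]
      rw [this]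
      have : Complex.normSq (π : ℂ) = π ^ 2 := by simp [Complex.normSq_apply, sq]
      rw [this, Real.sqrt_sq pi_pos.le]
    have habspb : ‖((π : ℂ) / b)‖ = (1 + c ^ 2) ^ (-(1 : ℝ) / 2) := by
      rw [norm_div, habsb, Complex.norm_real, Real.norm_eq_abs, abs_of_pos pi_pos]
      rw [div_mul_eq_div_div, div_self pi_pos.ne']
      rw [Real.sqrt_eq_rpow, one_div, ← Real.rpow_neg h1c.le]
      norm_num
    rw [habspb, ← Real.rpow_mul h1c.le]
    congr 1
    ring
  rw [habs, mul_assoc, ← Real.exp_add, ← Complex.add_re]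
  congr 1
  have hval : ((2 * (π:ℂ)) ^ 2 * (‖x‖:ℂ) ^ 2 + 2 * (2 * (π:ℂ)) * (-2 * (π:ℂ) * Complex.I) * (B:ℂ) +
        (-2 * (π:ℂ) * Complex.I) ^ 2 * (‖ξ‖:ℂ) ^ 2) / (4 * b) + -(π:ℂ) * (‖x‖:ℂ) ^ 2
      = ((-π * (‖ξ‖ ^ 2 - 2 * c * B + c ^ 2 * ‖x‖ ^ 2) / (1 + c ^ 2) : ℝ) : ℂ)
        + ((π * (c * (‖x‖ ^ 2 - ‖ξ‖ ^ 2) - 2 * B) / (1 + c ^ 2) : ℝ) : ℂ) * Complex.I := by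
    rw [hbdef]
    have hpi : ((π : ℝ) : ℂ) ≠ 0 := by exact_mod_cast pi_pos.ne'
    have hIc : (1 : ℂ) - Complex.I * c ≠ 0 := by
      intro h
      have := congrArg Complex.re h
      simp [Complex.mul_re] at this
    push_cast
    field_simp
    ring_nf
    simp only [Complex.I_sq]
    ring
  rw [hval]
  simp only [Complex.add_re, Complex.ofReal_re, Complex.mul_re, Complex.ofReal_im, Complex.I_re,
    Complex.I_im]
  rw [hsub]
  ring


theorem gaborWF_chirp_aux (d : ℕ) (c : ℝ) :
    GaborWF d (fun v => Complex.exp (-(π : ℂ) * (‖v‖ : ℂ) ^ 2))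
        (fun v => Complex.exp ((π : ℂ) * Complex.I * (c : ℂ) * (‖v‖ : ℂ) ^ 2))
      = {z : EuclideanSpace ℝ (Fin d) × EuclideanSpace ℝ (Fin d) |
          z.1 ≠ 0 ∧ z.2 = c • z.1} := by
  have h1c : (0:ℝ) < 1 + c ^ 2 := by positivity
  set A : ℝ := (1 + c ^ 2) ^ (-(d : ℝ) / 4) with hAdef
  have hA : 0 < A := Real.rpow_pos_of_pos h1c _
  ext z
  obtain ⟨x, ξ⟩ := z
  simp only [GaborWF, Set.mem_setOf_eq]
  constructor
  · rintro ⟨hz0, hno⟩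
    by_contra hcon
    apply hno
    have hne : ξ ≠ c • x := by
      rcases not_and_or.mp hcon with h | h
      · push_neg at h
        subst h
        intro hξ
        apply hz0
        rw [Prod.ext_iff]
        refine ⟨rfl, ?_⟩
        simpa using hξ
      · exact h
    have hu : (0:ℝ) < ‖ξ - c • x‖ := norm_pos_iff.mpr (sub_ne_zero.mpr hne)
    have hz0n : (0:ℝ) < ‖((x, ξ) : EuclideanSpace ℝ (Fin d) × EuclideanSpace ℝ (Fin d))‖ :=
      norm_pos_iff.mpr hz0
    set δ : ℝ := ‖ξ - c • x‖ / (2 * ‖((x, ξ) : EuclideanSpace ℝ (Fin d) × EuclideanSpace ℝ (Fin d))‖) with hδdef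
    have hδ : 0 < δ := by positivity
    refine ⟨{z | δ * ‖z‖ < ‖z.2 - c • z.1‖}, ?_, ?_, ?_, ?_⟩
    · exact isOpen_lt (by fun_prop) (by fun_prop)
    · rintro z hz l hl
      simp only [Set.mem_setOf_eq] at hz ⊢
      have hsm : (l • z).2 - c • (l • z).1 = l • (z.2 - c • z.1) := by
        simp [Prod.smul_fst, Prod.smul_snd, smul_sub, smul_comm l c]
      rw [hsm, norm_smul, norm_smul, Real.norm_eq_abs, abs_of_pos hl]
      calc δ * (l * ‖z‖) = l * (δ * ‖z‖) := by ring
        _ < l * ‖z.2 - c • z.1‖ := by exact mul_lt_mul_of_pos_left hz hl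
    · simp only [Set.mem_setOf_eq]
      rw [hδdef]
      rw [div_mul_eq_mul_div, div_lt_iff₀ (by positivity)]
      nlinarith
    · intro r hr
      have ha : 0 < π * δ ^ 2 / (1 + c ^ 2) := by positivity
      obtain ⟨C, hC⟩ := decay_bound ha hA hr
      refine ⟨C, fun z hz => ?_⟩
      rw [stft_norm d c z.1 z.2]
      simp only [Set.mem_setOf_eq] at hz
      have hsq : (δ * ‖z‖) ^ 2 ≤ ‖z.2 - c • z.1‖ ^ 2 := by
        have h0 : 0 ≤ δ * ‖z‖ := by positivity
        nlinarith
      have hmono : -π * ‖z.2 - c • z.1‖ ^ 2 / (1 + c ^ 2)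
          ≤ -(π * δ ^ 2 / (1 + c ^ 2) * ‖z‖ ^ 2) := by
        rw [show -(π * δ ^ 2 / (1 + c ^ 2) * ‖z‖ ^ 2) = -π * (δ * ‖z‖) ^ 2 / (1 + c ^ 2) by ring,
          div_le_div_iff₀ h1c h1c]
        nlinarith [mul_le_mul_of_nonneg_right (mul_le_mul_of_nonneg_left hsq pi_pos.le) h1c.le]
      calc A * Real.exp (-π * ‖z.2 - c • z.1‖ ^ 2 / (1 + c ^ 2))
          ≤ A * Real.exp (-(π * δ ^ 2 / (1 + c ^ 2) * ‖z‖ ^ 2)) := by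
            exact mul_le_mul_of_nonneg_left (Real.exp_le_exp.mpr hmono) hA.le
        _ ≤ C * (1 + ‖z‖ ^ 2) ^ (-r / 2) := hC (‖z‖ ^ 2) (by positivity)
  · rintro ⟨hx, hxi⟩
    have hz0 : ((x, ξ) : EuclideanSpace ℝ (Fin d) × EuclideanSpace ℝ (Fin d)) ≠ 0 := by
      intro h
      exact hx (congrArg Prod.fst h)
    refine ⟨hz0, ?_⟩
    rintro ⟨Γ, hΓopen, hΓcone, hΓmem, hΓdec⟩
    obtain ⟨C, hC⟩ := hΓdec 1 one_pos
    have hz0n : (0:ℝ) < ‖((x, ξ) : EuclideanSpace ℝ (Fin d) × EuclideanSpace ℝ (Fin d))‖ :=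
      norm_pos_iff.mpr hz0
    have hval : ∀ l : ℝ, 0 < l →
        A ≤ C * (1 + ‖l • ((x, ξ) : EuclideanSpace ℝ (Fin d) × EuclideanSpace ℝ (Fin d))‖ ^ 2) ^ (-(1:ℝ) / 2) := by
      intro l hl
      have hmem := hΓcone _ hΓmem l hl
      have hb := hC _ hmem
      rw [stft_norm d c] at hb
      have hzero : (l • ((x, ξ) : EuclideanSpace ℝ (Fin d) × EuclideanSpace ℝ (Fin d))).2
          - c • (l • ((x, ξ) : EuclideanSpace ℝ (Fin d) × EuclideanSpace ℝ (Fin d))).1 = 0 := by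
        simp [Prod.smul_fst, Prod.smul_snd, hxi, smul_comm l c]
      rw [hzero] at hb
      simpa using hb
    have hCpos : 0 < C := by
      have h := hval 1 one_pos
      by_contra hC0
      push_neg at hC0
      have hrp : (0:ℝ) < (1 + ‖(1:ℝ) • ((x, ξ) : EuclideanSpace ℝ (Fin d) × EuclideanSpace ℝ (Fin d))‖ ^ 2) ^ (-(1:ℝ) / 2) :=
        Real.rpow_pos_of_pos (by positivity) _
      nlinarith
    set l : ℝ := max 1 (2 * C / (A * ‖((x, ξ) : EuclideanSpace ℝ (Fin d) × EuclideanSpace ℝ (Fin d))‖)) with hldef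
    have hl : 0 < l := lt_of_lt_of_le one_pos (le_max_left _ _)
    have h2 := hval l hl
    set t : ℝ := l * ‖((x, ξ) : EuclideanSpace ℝ (Fin d) × EuclideanSpace ℝ (Fin d))‖ with htdef
    have ht : 0 < t := by positivity
    have hbound : (1 + ‖l • ((x, ξ) : EuclideanSpace ℝ (Fin d) × EuclideanSpace ℝ (Fin d))‖ ^ 2) ^ (-(1:ℝ) / 2) ≤ t⁻¹ := by
      rw [norm_smul, Real.norm_eq_abs, abs_of_pos hl]
      rw [show (-(1:ℝ)) / 2 = -(1/2) by norm_num, Real.rpow_neg (by positivity),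
        ← Real.sqrt_eq_rpow]
      refine inv_anti₀ ht ?_
      calc t = Real.sqrt (t ^ 2) := (Real.sqrt_sq ht.le).symm
        _ ≤ Real.sqrt (1 + t ^ 2) := Real.sqrt_le_sqrt (by linarith)
    have h3 : A ≤ C * t⁻¹ :=
      le_trans h2 (mul_le_mul_of_nonneg_left hbound hCpos.le)
    have hlge : 2 * C / (A * ‖((x, ξ) : EuclideanSpace ℝ (Fin d) × EuclideanSpace ℝ (Fin d))‖) ≤ l :=
      le_max_right _ _
    have h4 : 2 * C ≤ A * t := by
      rw [div_le_iff₀ (by positivity)] at hlge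
      rw [htdef]
      nlinarith
    have h5 : C * t⁻¹ ≤ A / 2 := by
      rw [mul_inv_le_iff₀ ht]
      nlinarith
    linarith


/-- For the chirp `f(x) = e^{πic|x|²}`, `c ≠ 0`, and the Gaussian window
`g(x) = e^{-π|x|²}`: `|V_g f(x,ξ)| = (1+c²)^{-d/4} e^{-π|ξ-cx|²/(1+c²)}`, and
consequently `WF_G(f) = {(x,ξ) : x ≠ 0, ξ = cx}`. -/
theorem gaborWF_chirp (d : ℕ) (hd : 0 < d) (c : ℝ) (hc : c ≠ 0) :
    (∀ x ξ : EuclideanSpace ℝ (Fin d),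
      ‖STFT d (fun v => Complex.exp (-(π : ℂ) * (‖v‖ : ℂ) ^ 2))
          (fun v => Complex.exp ((π : ℂ) * Complex.I * (c : ℂ) * (‖v‖ : ℂ) ^ 2)) x ξ‖
        = (1 + c ^ 2) ^ (-(d : ℝ) / 4) *
            Real.exp (-π * ‖ξ - c • x‖ ^ 2 / (1 + c ^ 2))) ∧
    GaborWF d (fun v => Complex.exp (-(π : ℂ) * (‖v‖ : ℂ) ^ 2))
        (fun v => Complex.exp ((π : ℂ) * Complex.I * (c : ℂ) * (‖v‖ : ℂ) ^ 2))
      = {z : EuclideanSpace ℝ (Fin d) × EuclideanSpace ℝ (Fin d) |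
          z.1 ≠ 0 ∧ z.2 = c • z.1} := by
  exact ⟨fun x ξ => stft_norm d c x ξ, gaborWF_chirp_aux d c⟩
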